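/- Let Z = {a, b, c} be a type with exactly three distinct elements, P : Z → Z → ℝ a row-stochastic matrix with zero diagonal (P(a,a) = P(b,b) = P(c,c) = 0) that is irreducible, and V : Z → Z → ℝ a matrix with all entries positive. Writing p_{xy} = P(x,y) and v_{xy} = V(x,y), the mean weighted hitting time satisfies H(V, a, c) = (v_{ac}·p_{ac} + p_{ab}·v_{ab} + p_{ab}·(v_{bc}·p_{bc} + p_{ba}·v_{ba})) / (1 − p_{ab}·p_{ba}), and the denominator 1 − p_{ab}·p_{ba} is positive. -/

import Mathlib

open scoped Classical

/-- Probability of a path `x = (x₀, …, x_m)` of length `m`: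
`Prob(x) = ∏_{i=1}^m P(x_{i-1}, x_i)`. -/
def pathProb {Z : Type*} (P : Z → Z → ℝ) {m : ℕ} (x : Fin (m + 1) → Z) : ℝ :=
  ∏ i : Fin m, P (x i.castSucc) (x i.succ)

/-- `P` is a row-stochastic matrix. -/
def RowStochastic {Z : Type*} [Fintype Z] (P : Z → Z → ℝ) : Prop :=
  (∀ a b, 0 ≤ P a b) ∧ ∀ a, ∑ b, P a b = 1

/-- The chain is irreducible: for all `a b` there is `m ≥ 1` with `(P^m)(a,b) > 0`. -/
def IsIrreducibleChain {Z : Type*} [Fintype Z] [DecidableEq Z] (P : Z → Z → ℝ) : Prop :=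
  ∀ a b : Z, ∃ m : ℕ, 1 ≤ m ∧ 0 < (Matrix.of P ^ m) a b

/-- Weight of a path `x = (x₀, …, x_m)` with weight matrix `V`:
`Weight(V,x) = ∑_{i=1}^m V(x_{i-1}, x_i)`. -/
def pathWeight {Z : Type*} (V : Z → Z → ℝ) {m : ℕ} (x : Fin (m + 1) → Z) : ℝ :=
  ∑ i : Fin m, V (x i.castSucc) (x i.succ)

/-- The mean weighted hitting time from `a` to `b`:
`H(V,a,b) = ∑_{m=1}^∞ ∑_{x ∈ S^m_{⟨a,b⟩}} Weight(V,x)·Prob(x)`. -/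
noncomputable def weightedHittingTime {Z : Type*} [Fintype Z] (P V : Z → Z → ℝ)
    (a b : Z) : ℝ :=
  ∑' m : ℕ, ∑ x ∈ Finset.univ.filter (fun x : Fin (m + 1 + 1) → Z =>
      x 0 = a ∧ x (Fin.last (m + 1)) = b ∧
      ∀ i : Fin (m + 1 + 1), i < Fin.last (m + 1) → x i ≠ b),
    pathWeight V x * pathProb P x

/-! ### Auxiliary material for `stmt_16` -/

/-- The canonical alternating path with `m+1` edges: `a, b, a, b, …` ending with `c`. -/
def cpath {Z : Type*} (a b c : Z) (m : ℕ) : Fin (m + 2) → Z :=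
  fun i => if (i : ℕ) = m + 1 then c else if (i : ℕ) % 2 = 0 then a else b

lemma cpath_val {Z : Type*} (a b c : Z) (m : ℕ) (i : Fin (m + 2)) :
    cpath a b c m i = if (i : ℕ) = m + 1 then c else if (i : ℕ) % 2 = 0 then a else b := rfl

lemma prob_zero16 {Z : Type*} (a b c : Z) (P : Z → Z → ℝ) :
    pathProb P (cpath a b c 0) = P a c := by
  show (∏ i : Fin 1, P (cpath a b c 0 i.castSucc) (cpath a b c 0 i.succ)) = _
  simp [Fin.prod_univ_one, cpath_val]

lemma prob_one16 {Z : Type*} (a b c : Z) (P : Z → Z → ℝ) :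
    pathProb P (cpath a b c 1) = P a b * P b c := by
  show (∏ i : Fin 2, P (cpath a b c 1 i.castSucc) (cpath a b c 1 i.succ)) = _
  simp [Fin.prod_univ_two, cpath_val]

lemma weight_zero16 {Z : Type*} (a b c : Z) (V : Z → Z → ℝ) :
    pathWeight V (cpath a b c 0) = V a c := by
  show (∑ i : Fin 1, V (cpath a b c 0 i.castSucc) (cpath a b c 0 i.succ)) = _
  simp [Fin.sum_univ_one, cpath_val]

lemma weight_one16 {Z : Type*} (a b c : Z) (V : Z → Z → ℝ) :
    pathWeight V (cpath a b c 1) = V a b + V b c := by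
  show (∑ i : Fin 2, V (cpath a b c 1 i.castSucc) (cpath a b c 1 i.succ)) = _
  simp [Fin.sum_univ_two, cpath_val]

lemma prob_rec16 {Z : Type*} (a b c : Z) (P : Z → Z → ℝ) (m : ℕ) :
    pathProb P (cpath a b c (m + 2)) = (P a b * P b a) * pathProb P (cpath a b c m) := by
  show (∏ i : Fin (m + 3), P (cpath a b c (m+2) i.castSucc) (cpath a b c (m+2) i.succ)) = _
  rw [Fin.prod_univ_succ, Fin.prod_univ_succ]
  have step : ∀ i : Fin (m+1),
      P (cpath a b c (m+2) ((i.succ.succ : Fin (m+3)).castSucc)) (cpath a b c (m+2) (i.succ.succ).succ)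
      = P (cpath a b c m i.castSucc) (cpath a b c m i.succ) := by
    intro i
    simp only [cpath_val, Fin.val_succ, Fin.coe_castSucc]
    have k1 : ((i:ℕ) + 1 + 1 = m + 2 + 1) ↔ ((i:ℕ) = m + 1) := by omega
    have k2 : ((i:ℕ) + 1 + 1) % 2 = (i:ℕ) % 2 := by omega
    have k3 : ((i:ℕ) + 1 + 1 + 1 = m + 2 + 1) ↔ ((i:ℕ) + 1 = m + 1) := by omega
    have k4 : ((i:ℕ) + 1 + 1 + 1) % 2 = ((i:ℕ) + 1) % 2 := by omega
    rw [if_congr k1 rfl (if_congr (by rw [k2]) rfl rfl),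
        if_congr k3 rfl (if_congr (by rw [k4]) rfl rfl)]
  rw [Finset.prod_congr rfl (fun i _ => step i)]
  have e0 : cpath a b c (m+2) ((0 : Fin (m+3)).castSucc) = a := by simp [cpath_val]
  have e1 : cpath a b c (m+2) ((0 : Fin (m+3)).succ) = b := by simp [cpath_val]
  have e1' : cpath a b c (m+2) (((0 : Fin (m+2)).succ).castSucc) = b := by simp [cpath_val]
  have e2 : cpath a b c (m+2) (((0 : Fin (m+2)).succ).succ) = a := by
    simp [cpath_val]; simp [Nat.mod_eq_of_lt (by omega : 2 < m + 2 + 2)]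
  rw [e0, e1, e1', e2]
  show P a b * (P b a * pathProb P (cpath a b c m)) = _
  ring

lemma weight_rec16 {Z : Type*} (a b c : Z) (V : Z → Z → ℝ) (m : ℕ) :
    pathWeight V (cpath a b c (m + 2)) = (V a b + V b a) + pathWeight V (cpath a b c m) := by
  show (∑ i : Fin (m + 3), V (cpath a b c (m+2) i.castSucc) (cpath a b c (m+2) i.succ)) = _
  rw [Fin.sum_univ_succ, Fin.sum_univ_succ]
  have step : ∀ i : Fin (m+1),
      V (cpath a b c (m+2) ((i.succ.succ : Fin (m+3)).castSucc)) (cpath a b c (m+2) (i.succ.succ).succ)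
      = V (cpath a b c m i.castSucc) (cpath a b c m i.succ) := by
    intro i
    simp only [cpath_val, Fin.val_succ, Fin.coe_castSucc]
    have k1 : ((i:ℕ) + 1 + 1 = m + 2 + 1) ↔ ((i:ℕ) = m + 1) := by omega
    have k2 : ((i:ℕ) + 1 + 1) % 2 = (i:ℕ) % 2 := by omega
    have k3 : ((i:ℕ) + 1 + 1 + 1 = m + 2 + 1) ↔ ((i:ℕ) + 1 = m + 1) := by omega
    have k4 : ((i:ℕ) + 1 + 1 + 1) % 2 = ((i:ℕ) + 1) % 2 := by omega
    rw [if_congr k1 rfl (if_congr (by rw [k2]) rfl rfl),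
        if_congr k3 rfl (if_congr (by rw [k4]) rfl rfl)]
  rw [Finset.sum_congr rfl (fun i _ => step i)]
  have e0 : cpath a b c (m+2) ((0 : Fin (m+3)).castSucc) = a := by simp [cpath_val]
  have e1 : cpath a b c (m+2) ((0 : Fin (m+3)).succ) = b := by simp [cpath_val]
  have e1' : cpath a b c (m+2) (((0 : Fin (m+2)).succ).castSucc) = b := by simp [cpath_val]
  have e2 : cpath a b c (m+2) (((0 : Fin (m+2)).succ).succ) = a := by
    simp [cpath_val]; simp [Nat.mod_eq_of_lt (by omega : 2 < m + 2 + 2)]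
  rw [e0, e1, e1', e2]
  show V a b + (V b a + pathWeight V (cpath a b c m)) = _
  ring

lemma prob_even16 {Z : Type*} (a b c : Z) (P : Z → Z → ℝ) (k : ℕ) :
    pathProb P (cpath a b c (2 * k)) = (P a b * P b a) ^ k * P a c := by
  induction k with
  | zero => simpa using prob_zero16 a b c P
  | succ k ih =>
    have h2 : 2 * (k + 1) = 2 * k + 2 := by ring
    rw [h2, prob_rec16, ih]; ring

lemma prob_odd16 {Z : Type*} (a b c : Z) (P : Z → Z → ℝ) (k : ℕ) :
    pathProb P (cpath a b c (2 * k + 1)) = (P a b * P b a) ^ k * (P a b * P b c) := by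
  induction k with
  | zero => simpa using prob_one16 a b c P
  | succ k ih =>
    have h2 : 2 * (k + 1) + 1 = 2 * k + 1 + 2 := by ring
    rw [h2, prob_rec16, ih]; ring

lemma weight_even16 {Z : Type*} (a b c : Z) (V : Z → Z → ℝ) (k : ℕ) :
    pathWeight V (cpath a b c (2 * k)) = k * (V a b + V b a) + V a c := by
  induction k with
  | zero => simpa using weight_zero16 a b c V
  | succ k ih =>
    have h2 : 2 * (k + 1) = 2 * k + 2 := by ring
    rw [h2, weight_rec16, ih]; push_cast; ring

lemma weight_odd16 {Z : Type*} (a b c : Z) (V : Z → Z → ℝ) (k : ℕ) :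
    pathWeight V (cpath a b c (2 * k + 1)) = k * (V a b + V b a) + (V a b + V b c) := by
  induction k with
  | zero => simpa using weight_one16 a b c V
  | succ k ih =>
    have h2 : 2 * (k + 1) + 1 = 2 * k + 1 + 2 := by ring
    rw [h2, weight_rec16, ih]; push_cast; ring

lemma innerSumEq16 {Z : Type*} [Fintype Z] [DecidableEq Z] (a b c : Z)
    (hac : a ≠ c) (hbc : b ≠ c) (hZ : ∀ z : Z, z = a ∨ z = b ∨ z = c)
    (P V : Z → Z → ℝ) (hPaa : P a a = 0) (hPbb : P b b = 0) (m : ℕ) :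
    ∑ x ∈ Finset.univ.filter (fun x : Fin (m + 1 + 1) → Z =>
      x 0 = a ∧ x (Fin.last (m + 1)) = c ∧
      ∀ i : Fin (m + 1 + 1), i < Fin.last (m + 1) → x i ≠ c),
    pathWeight V x * pathProb P x
    = pathWeight V (cpath a b c m) * pathProb P (cpath a b c m) := by
  apply Finset.sum_eq_single_of_mem
  · rw [Finset.mem_filter]
    refine ⟨Finset.mem_univ _, ?_, ?_, ?_⟩
    · simp [cpath_val]
    · simp [cpath_val, Fin.last]
    · intro i hi
      rw [Fin.lt_def] at hi
      simp only [Fin.val_last] at hi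
      rw [cpath_val]
      have : (i : ℕ) ≠ m + 1 := by omega
      rw [if_neg this]
      split <;> [exact hac; exact hbc]
  · intro y hy hne
    rw [Finset.mem_filter] at hy
    obtain ⟨-, hy0, hyl, hym⟩ := hy
    by_contra h0
    have hprob : pathProb P y ≠ 0 := by
      intro h; apply h0; rw [h, mul_zero]
    have hfac : ∀ i : Fin (m + 1), P (y i.castSucc) (y i.succ) ≠ 0 := by
      rw [pathProb, Finset.prod_ne_zero_iff] at hprob
      exact fun i => hprob i (Finset.mem_univ i)
    apply hne
    have key : ∀ j (h : j < m + 2), y ⟨j, h⟩ = cpath a b c m ⟨j, h⟩ := by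
      intro j
      induction j with
      | zero =>
        intro h
        have : (⟨0, h⟩ : Fin (m + 2)) = 0 := rfl
        rw [this, hy0, cpath_val]
        simp
      | succ j ih =>
        intro h
        by_cases hlast : j + 1 = m + 1
        · have : (⟨j + 1, h⟩ : Fin (m + 2)) = Fin.last (m + 1) := by
            simp [Fin.ext_iff, hlast]
          rw [this, hyl, cpath_val]
          simp [hlast]
        · have hj1 : j + 1 < m + 1 := by omega
          have hjne : y ⟨j + 1, h⟩ ≠ c := by
            apply hym
            rw [Fin.lt_def]; simpa using hj1
          have hprev := ih (by omega)
          set i : Fin (m + 1) := ⟨j, by omega⟩ with hi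
          have hcs : (i.castSucc : Fin (m + 2)) = ⟨j, by omega⟩ := rfl
          have hsu : (i.succ : Fin (m + 2)) = ⟨j + 1, h⟩ := rfl
          have hf := hfac i
          rw [hcs, hsu, hprev] at hf
          have hjm : j ≠ m + 1 := by omega
          have hf2 : P (if j = m + 1 then c else if j % 2 = 0 then a else b)
              (y ⟨j + 1, h⟩) ≠ 0 := hf
          rw [if_neg hjm] at hf2
          clear hf
          have hf := hf2
          show y ⟨j + 1, h⟩ = if j + 1 = m + 1 then c else if (j + 1) % 2 = 0 then a else b
          rw [if_neg hlast]
          by_cases hpar : j % 2 = 0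
          · rw [if_neg (by omega : ¬ (j + 1) % 2 = 0)]
            rw [if_pos hpar] at hf
            rcases hZ (y ⟨j + 1, h⟩) with h' | h' | h'
            · exfalso; rw [h', hPaa] at hf; exact hf rfl
            · exact h'
            · exact absurd h' hjne
          · rw [if_pos (by omega : (j + 1) % 2 = 0)]
            rw [if_neg hpar] at hf
            rcases hZ (y ⟨j + 1, h⟩) with h' | h' | h'
            · exact h'
            · exfalso; rw [h', hPbb] at hf; exact hf rfl
            · exact absurd h' hjne
    funext i
    have := key i.val i.isLt
    simpa using this

lemma sum_three16 {Z : Type*} [Fintype Z] [DecidableEq Z] (a b c : Z)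
    (hab : a ≠ b) (hac : a ≠ c) (hbc : b ≠ c) (hZ : ∀ z : Z, z = a ∨ z = b ∨ z = c)
    (f : Z → ℝ) : ∑ z, f z = f a + f b + f c := by
  have huniv : (Finset.univ : Finset Z) = {a, b, c} := by
    ext z; simp [hZ z]
  rw [huniv, Finset.sum_insert (by simp [hab, hac]), Finset.sum_insert (by simp [hbc]),
    Finset.sum_singleton, add_assoc]

lemma denom_pos16 {Z : Type*} [Fintype Z] [DecidableEq Z] (a b c : Z)
    (hab : a ≠ b) (hac : a ≠ c) (hbc : b ≠ c) (hZ : ∀ z : Z, z = a ∨ z = b ∨ z = c)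
    (P : Z → Z → ℝ) (hP : RowStochastic P)
    (hdiag : P a a = 0 ∧ P b b = 0 ∧ P c c = 0)
    (hirr : IsIrreducibleChain P) :
    0 < 1 - P a b * P b a := by
  obtain ⟨hnn, hrow⟩ := hP
  have hra : P a a + P a b + P a c = 1 := by
    rw [← sum_three16 a b c hab hac hbc hZ (P a)]; exact hrow a
  have hrb : P b a + P b b + P b c = 1 := by
    rw [← sum_three16 a b c hab hac hbc hZ (P b)]; exact hrow b
  have hab1 : P a b ≤ 1 := by nlinarith [hnn a a, hnn a c]
  have hba1 : P b a ≤ 1 := by nlinarith [hnn b b, hnn b c]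
  rw [sub_pos]
  rcases lt_or_eq_of_le hab1 with h | h
  · nlinarith [hnn a b, hnn b a]
  rcases lt_or_eq_of_le hba1 with h' | h'
  · nlinarith [hnn a b, hnn b a]
  exfalso
  have hac0 : P a c = 0 := by rw [hdiag.1] at hra; linarith
  have hbc0 : P b c = 0 := by rw [hdiag.2.1] at hrb; linarith
  have key : ∀ n : ℕ, (Matrix.of P ^ n) a c = 0 ∧ (Matrix.of P ^ n) b c = 0 := by
    intro n
    induction n with
    | zero =>
      constructor <;> simp [Matrix.one_apply_ne, hac, hbc]
    | succ n ih =>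
      have expand : ∀ z : Z, (Matrix.of P ^ (n + 1)) z c
          = P z a * (Matrix.of P ^ n) a c + P z b * (Matrix.of P ^ n) b c
            + P z c * (Matrix.of P ^ n) c c := by
        intro z
        rw [pow_succ', Matrix.mul_apply]
        exact sum_three16 a b c hab hac hbc hZ _
      constructor
      · rw [expand a, ih.1, ih.2, hdiag.1, hac0]; ring
      · rw [expand b, ih.1, ih.2, hdiag.2.1, hbc0]; ring
  obtain ⟨n, -, hpos⟩ := hirr a c
  rw [(key n).1] at hpos
  exact lt_irrefl 0 hpos

theorem stmt_16 {Z : Type*} [Fintype Z] [DecidableEq Z] (a b c : Z)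
    (hab : a ≠ b) (hac : a ≠ c) (hbc : b ≠ c) (hZ : ∀ z : Z, z = a ∨ z = b ∨ z = c)
    (P : Z → Z → ℝ) (hP : RowStochastic P)
    (hdiag : P a a = 0 ∧ P b b = 0 ∧ P c c = 0)
    (hirr : IsIrreducibleChain P)
    (V : Z → Z → ℝ) (hV : ∀ u v : Z, 0 < V u v) :
    weightedHittingTime P V a c =
      (V a c * P a c + P a b * V a b + P a b * (V b c * P b c + P b a * V b a)) /
        (1 - P a b * P b a) ∧
    0 < 1 - P a b * P b a := by
  have hpos := denom_pos16 a b c hab hac hbc hZ P hP hdiag hirr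
  refine ⟨?_, hpos⟩
  obtain ⟨hnn, hrow⟩ := hP
  set q := P a b * P b a with hqdef
  have hq0 : 0 ≤ q := mul_nonneg (hnn a b) (hnn b a)
  have hq1 : q < 1 := by linarith
  -- row-sum identities
  have hra : P a a + P a b + P a c = 1 := by
    rw [← sum_three16 a b c hab hac hbc hZ (P a)]; exact hrow a
  have hrb : P b a + P b b + P b c = 1 := by
    rw [← sum_three16 a b c hab hac hbc hZ (P b)]; exact hrow b
  have hac' : P a c = 1 - P a b := by rw [hdiag.1] at hra; linarith
  have hbc' : P b c = 1 - P b a := by rw [hdiag.2.1] at hrb; linarith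
  set F : ℕ → ℝ := fun m => pathWeight V (cpath a b c m) * pathProb P (cpath a b c m)
    with hFdef
  have h1 : weightedHittingTime P V a c = ∑' m, F m := by
    rw [weightedHittingTime]
    refine tsum_congr fun m => ?_
    have := innerSumEq16 a b c hac hbc hZ P V hdiag.1 hdiag.2.1 m
    convert this using 2
    exact Finset.filter_congr_decidable _ _ _
  set w : ℝ := V a b + V b a with hwdef
  have hFe : ∀ k : ℕ, F (2 * k)
      = (w * P a c) * ((k : ℝ) * q ^ k) + (V a c * P a c) * q ^ k := by
    intro k
    rw [hFdef]
    simp only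
    rw [prob_even16, weight_even16, ← hqdef, ← hwdef]
    ring
  have hFo : ∀ k : ℕ, F (2 * k + 1)
      = (w * P a b * P b c) * ((k : ℝ) * q ^ k)
        + ((V a b + V b c) * P a b * P b c) * q ^ k := by
    intro k
    rw [hFdef]
    simp only
    rw [prob_odd16, weight_odd16, ← hqdef, ← hwdef]
    ring
  have hqn : ‖q‖ < 1 := by rw [Real.norm_eq_abs, abs_of_nonneg hq0]; exact hq1
  have s1 : Summable (fun k : ℕ => (k : ℝ) * q ^ k) := by
    simpa using summable_pow_mul_geometric_of_norm_lt_one 1 hqn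
  have s2 : Summable (fun k : ℕ => q ^ k) := summable_geometric_of_lt_one hq0 hq1
  have se : Summable (fun k : ℕ => F (2 * k)) := by
    apply Summable.congr ((s1.mul_left (w * P a c)).add (s2.mul_left (V a c * P a c)))
    intro k; rw [hFe k]
  have so : Summable (fun k : ℕ => F (2 * k + 1)) := by
    apply Summable.congr ((s1.mul_left (w * P a b * P b c)).add
      (s2.mul_left ((V a b + V b c) * P a b * P b c)))
    intro k; rw [hFo k]
  have t1 : ∑' k : ℕ, (k : ℝ) * q ^ k = q / (1 - q) ^ 2 :=
    tsum_coe_mul_geometric_of_norm_lt_one hqn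
  have t2 : ∑' k : ℕ, q ^ k = (1 - q)⁻¹ := tsum_geometric_of_lt_one hq0 hq1
  have h2 : (∑' m, F m)
      = (w * P a c) * (q / (1 - q) ^ 2) + (V a c * P a c) * (1 - q)⁻¹
        + ((w * P a b * P b c) * (q / (1 - q) ^ 2)
          + ((V a b + V b c) * P a b * P b c) * (1 - q)⁻¹) := by
    rw [← tsum_even_add_odd se so, tsum_congr hFe, tsum_congr hFo,
      Summable.tsum_add (s1.mul_left _) (s2.mul_left _),
      Summable.tsum_add (s1.mul_left _) (s2.mul_left _),
      tsum_mul_left, tsum_mul_left, tsum_mul_left, tsum_mul_left, t1, t2]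
  rw [h1, h2, hac', hbc']
  have hne : 1 - q ≠ 0 := ne_of_gt hpos
  rw [hqdef] at hne ⊢
  rw [hwdef]
  field_simp
  ring
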